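/- Let a, b ∈ ℝᵈ with a_k < b_k for each k and Q = [a, b]. Let κ : ℝᵈ → ℝ be continuously differentiable with κ ≥ 0 on Q, let u ∈ ℝ³ with ‖u‖ = 1, and let m : ℝᵈ → ℝ³ be twice continuously differentiable on a neighborhood of Q, satisfying for each component i and each face of Q normal to e_k the condition κ(x) ∂_k m_i(x) = 0. Define h_eff[m] = div(κ ∇m) − ( m − ⟨m, u⟩ u ) (componentwise divergence form). Then ∫_Q ⟨ h_eff[m](x), m(x) ⟩ dx = − ∫_Q ( κ |∇m|² + ‖m‖² − ⟨m, u⟩² ) dx = −2 F[m] ≤ 0. -/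

import Mathlib

open RealInnerProductSpace MeasureTheory

/-- The `k`-th partial derivative `∂ₖ f x` of a scalar function on `ℝᵈ`. -/
noncomputable def pd {d : ℕ} (k : Fin d) (f : EuclideanSpace ℝ (Fin d) → ℝ)
    (x : EuclideanSpace ℝ (Fin d)) : ℝ :=
  fderiv ℝ f x (EuclideanSpace.single k 1)

section Aux

variable {d : ℕ} {κ : EuclideanSpace ℝ (Fin d) → ℝ}
  {m : EuclideanSpace ℝ (Fin d) → EuclideanSpace ℝ (Fin 3)}
  {U : Set (EuclideanSpace ℝ (Fin d))}

lemma aux_phi (hm : ContDiffOn ℝ 2 m U) (i : Fin 3) :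
    ContDiffOn ℝ 2 (fun x => m x i) U :=
  (EuclideanSpace.proj i : EuclideanSpace ℝ (Fin 3) →L[ℝ] ℝ).contDiff.comp_contDiffOn hm

lemma aux_pd_contDiffOn (hU : IsOpen U) {f : EuclideanSpace ℝ (Fin d) → ℝ}
    (hf : ContDiffOn ℝ 2 f U) (k : Fin d) :
    ContDiffOn ℝ 1 (fun x => pd k f x) U := by
  have h1 : ContDiffOn ℝ 1 (fderiv ℝ f) U := hf.fderiv_of_isOpen hU (by norm_num)
  exact (ContinuousLinearMap.apply ℝ ℝ (EuclideanSpace.single k 1)).contDiff.comp_contDiffOn h1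

lemma aux_pd_continuousOn (hU : IsOpen U) {f : EuclideanSpace ℝ (Fin d) → ℝ}
    (hf : ContDiffOn ℝ 1 f U) (k : Fin d) :
    ContinuousOn (fun x => pd k f x) U := by
  have h1 : ContinuousOn (fderiv ℝ f) U := hf.continuousOn_fderiv_of_isOpen hU le_rfl
  exact (ContinuousLinearMap.apply ℝ ℝ
    (EuclideanSpace.single k 1)).continuous.comp_continuousOn h1

lemma aux_p (hκ : ContDiff ℝ 1 κ) (hU : IsOpen U) (hm : ContDiffOn ℝ 2 m U) (i : Fin 3)
    (k : Fin d) :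
    ContDiffOn ℝ 1 (fun y => κ y * pd k (fun z => m z i) y) U :=
  hκ.contDiffOn.mul (aux_pd_contDiffOn hU (aux_phi hm i) k)

lemma aux_G_contDiffOn (hκ : ContDiff ℝ 1 κ) (hU : IsOpen U) (hm : ContDiffOn ℝ 2 m U)
    (k : Fin d) :
    ContDiffOn ℝ 1 (fun x => ∑ i, κ x * pd k (fun z => m z i) x * m x i) U := by
  apply ContDiffOn.sum
  intro i _
  exact (aux_p hκ hU hm i k).mul ((aux_phi hm i).of_le one_le_two)

lemma aux_sum_swap (A B : Fin 3 → Fin d → ℝ) (mm : Fin 3 → ℝ) (c : ℝ) :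
    (∑ k, ∑ i, (A i k * mm i + c * B i k ^ 2))
      = (∑ i, (∑ k, A i k) * mm i) + c * ∑ k, ∑ i, B i k ^ 2 := by
  simp only [Finset.sum_add_distrib, Finset.mul_sum, Finset.sum_mul]
  rw [Finset.sum_comm (f := fun k i => A i k * mm i)]

lemma aux_pd_G (hκ : ContDiff ℝ 1 κ) (hU : IsOpen U) (hm : ContDiffOn ℝ 2 m U)
    {x : EuclideanSpace ℝ (Fin d)} (hx : x ∈ U) (k : Fin d) :
    pd k (fun x' => ∑ i, κ x' * pd k (fun z => m z i) x' * m x' i) x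
      = ∑ i, (pd k (fun y => κ y * pd k (fun z => m z i) y) x * m x i
          + κ x * pd k (fun z => m z i) x ^ 2) := by
  have hdp : ∀ i : Fin 3, DifferentiableAt ℝ (fun y => κ y * pd k (fun z => m z i) y) x :=
    fun i => ((aux_p hκ hU hm i k).contDiffAt (hU.mem_nhds hx)).differentiableAt one_ne_zero
  have hdφ : ∀ i : Fin 3, DifferentiableAt ℝ (fun y => m y i) x := fun i =>
    ((aux_phi hm i).contDiffAt (hU.mem_nhds hx)).differentiableAt two_ne_zero
  have hterm : ∀ i : Fin 3,
      DifferentiableAt ℝ (fun x' => κ x' * pd k (fun z => m z i) x' * m x' i) x :=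
    fun i => (hdp i).mul (hdφ i)
  have e1 : fderiv ℝ (fun x' => ∑ i, κ x' * pd k (fun z => m z i) x' * m x' i) x
      = ∑ i, fderiv ℝ (fun x' => κ x' * pd k (fun z => m z i) x' * m x' i) x :=
    fderiv_fun_sum (fun i _ => hterm i)
  have e2 : ∀ i : Fin 3, fderiv ℝ (fun x' => κ x' * pd k (fun z => m z i) x' * m x' i) x
      = (κ x * pd k (fun z => m z i) x) • fderiv ℝ (fun y => m y i) x
        + (m x i) • fderiv ℝ (fun y => κ y * pd k (fun z => m z i) y) x :=
    fun i => fderiv_mul (hdp i) (hdφ i)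
  show (fderiv ℝ (fun x' => ∑ i, κ x' * pd k (fun z => m z i) x' * m x' i) x)
      (EuclideanSpace.single k 1) = _
  rw [e1, ContinuousLinearMap.sum_apply]
  refine Finset.sum_congr rfl fun i _ => ?_
  rw [e2 i]
  simp only [ContinuousLinearMap.add_apply, ContinuousLinearMap.smul_apply, smul_eq_mul]
  unfold pd
  ring

end Aux

/-- On a box `Q = [a, b] ⊆ ℝᵈ`, with `κ ≥ 0` of class `C¹`, unit easy axis `u`,
`m : ℝᵈ → ℝ³` twice continuously differentiable on a neighborhood of `Q` satisfying
the Neumann boundary condition `κ ∂ₖ mᵢ = 0` on the faces normal to `eₖ`, the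
effective field `h_eff[m] = div(κ∇m) − (m − ⟨m,u⟩u)` satisfies
`∫_Q ⟨h_eff[m], m⟩ = −∫_Q (κ |∇m|² + ‖m‖² − ⟨m,u⟩²) = −2F[m] ≤ 0`. -/
theorem effective_field_energy_identity {d : ℕ}
    (a b : Fin d → ℝ) (hab : ∀ k, a k < b k)
    (Q : Set (EuclideanSpace ℝ (Fin d)))
    (hQ : Q = {x : EuclideanSpace ℝ (Fin d) | ∀ k, a k ≤ x k ∧ x k ≤ b k})
    (κ : EuclideanSpace ℝ (Fin d) → ℝ) (hκ : ContDiff ℝ 1 κ)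
    (hκ0 : ∀ x ∈ Q, 0 ≤ κ x)
    (u : EuclideanSpace ℝ (Fin 3)) (hu : ‖u‖ = 1)
    (m : EuclideanSpace ℝ (Fin d) → EuclideanSpace ℝ (Fin 3))
    (U : Set (EuclideanSpace ℝ (Fin d))) (hU : IsOpen U) (hQU : Q ⊆ U)
    (hm : ContDiffOn ℝ 2 m U)
    (hbc : ∀ (i : Fin 3) (k : Fin d), ∀ x ∈ Q,
      (x k = a k ∨ x k = b k) → κ x * pd k (fun y => m y i) x = 0) :
    (∫ x in Q,
        ((∑ i, (∑ k, pd k (fun y => κ y * pd k (fun z => m z i) y) x) * m x i)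
          - (‖m x‖ ^ 2 - ⟪m x, u⟫ ^ 2))
      = - ∫ x in Q,
          (κ x * ∑ k, ∑ i, (pd k (fun z => m z i) x) ^ 2
            + ‖m x‖ ^ 2 - ⟪m x, u⟫ ^ 2)) ∧
    (∫ x in Q,
        ((∑ i, (∑ k, pd k (fun y => κ y * pd k (fun z => m z i) y) x) * m x i)
          - (‖m x‖ ^ 2 - ⟪m x, u⟫ ^ 2))
      ≤ 0) := by
  have hA : ∀ x, (0:ℝ) ≤ ‖m x‖ ^ 2 - ⟪m x, u⟫ ^ 2 := by
    intro x
    have h := abs_real_inner_le_norm (m x) u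
    rw [hu, mul_one] at h
    nlinarith [abs_nonneg ⟪m x, u⟫, sq_abs ⟪m x, u⟫, norm_nonneg (m x)]
  cases d with
  | zero =>
    have hQu : Q = Set.univ := by rw [hQ]; ext x; simp
    have hQm : MeasurableSet Q := hQu ▸ MeasurableSet.univ
    have h0 : (0:ℝ) ≤ ∫ x in Q, (‖m x‖ ^ 2 - ⟪m x, u⟫ ^ 2) :=
      setIntegral_nonneg hQm fun x _ => hA x
    constructor
    · simp only [Finset.univ_eq_empty, Finset.sum_empty, zero_mul, Finset.sum_const_zero,
        zero_sub, mul_zero, zero_add]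
      exact integral_neg _
    · simp only [Finset.univ_eq_empty, Finset.sum_empty, zero_mul, Finset.sum_const_zero,
        zero_sub, mul_zero, zero_add]
      rw [integral_neg]
      exact neg_nonpos.2 h0
  | succ n =>
    have hQeq : Q = ⇑(PiLp.continuousLinearEquiv 2 ℝ (fun _ : Fin (n+1) => ℝ)).symm '' Set.Icc a b := by
      subst hQ
      rw [ContinuousLinearEquiv.image_symm_eq_preimage]
      ext x
      simp only [Set.mem_setOf_eq, Set.mem_preimage, Set.mem_Icc, Pi.le_def]
      exact ⟨fun h => ⟨fun k => (h k).1, fun k => (h k).2⟩, fun h k => ⟨h.1 k, h.2 k⟩⟩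
    have hQsub : ∀ y ∈ Set.Icc a b, (PiLp.continuousLinearEquiv 2 ℝ (fun _ : Fin (n+1) => ℝ)).symm y ∈ Q := fun y hy =>
      hQeq ▸ Set.mem_image_of_mem _ hy
    have hQm : MeasurableSet Q := by
      rw [hQeq]
      exact (((PiLp.continuousLinearEquiv 2 ℝ (fun _ : Fin (n+1) => ℝ)).symm.toHomeomorph.isClosed_image).2 isClosed_Icc).measurableSet
    have hQcomp : IsCompact Q := hQeq ▸ isCompact_Icc.image (PiLp.continuousLinearEquiv 2 ℝ (fun _ : Fin (n+1) => ℝ)).symm.continuous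
    have hTrans : ∀ F : EuclideanSpace ℝ (Fin (n+1)) → ℝ,
        (∫ x in Q, F x) = ∫ y in Set.Icc a b, F ((PiLp.continuousLinearEquiv 2 ℝ (fun _ : Fin (n+1) => ℝ)).symm y) := by
      intro F
      rw [hQeq]
      exact MeasurePreserving.setIntegral_image_emb
        (MeasurePreserving.symm _ (EuclideanSpace.volume_preserving_symm_measurableEquiv_toLp (Fin (n+1))))
        (MeasurableEquiv.measurableEmbedding _) F (Set.Icc a b)
    -- divergence theorem
    have hface : ∀ (k : Fin (n+1)) (c : ℝ), (c = a k ∨ c = b k) →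
        (∫ y in Set.Icc (a ∘ k.succAbove) (b ∘ k.succAbove),
          ∑ i, κ ((PiLp.continuousLinearEquiv 2 ℝ (fun _ : Fin (n+1) => ℝ)).symm (k.insertNth c y)) *
              pd k (fun z => m z i) ((PiLp.continuousLinearEquiv 2 ℝ (fun _ : Fin (n+1) => ℝ)).symm (k.insertNth c y)) *
              m ((PiLp.continuousLinearEquiv 2 ℝ (fun _ : Fin (n+1) => ℝ)).symm (k.insertNth c y)) i) = 0 := by
      intro k c hc
      rw [setIntegral_congr_fun measurableSet_Icc (g := fun _ => (0:ℝ)) fun y hy => ?_,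
        integral_zero]
      have hcmem : c ∈ Set.Icc (a k) (b k) := by
        rcases hc with h | h <;> rw [h]
        · exact ⟨le_rfl, (hab k).le⟩
        · exact ⟨(hab k).le, le_rfl⟩
      have hmem : k.insertNth c y ∈ Set.Icc a b := Fin.insertNth_mem_Icc.2 ⟨hcmem, hy⟩
      have hxQ : (PiLp.continuousLinearEquiv 2 ℝ (fun _ : Fin (n+1) => ℝ)).symm (k.insertNth c y) ∈ Q := hQsub _ hmem
      have hxk : ((PiLp.continuousLinearEquiv 2 ℝ (fun _ : Fin (n+1) => ℝ)).symm (k.insertNth c y)) k = a k ∨ ((PiLp.continuousLinearEquiv 2 ℝ (fun _ : Fin (n+1) => ℝ)).symm (k.insertNth c y)) k = b k := by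
        have hsame : ((PiLp.continuousLinearEquiv 2 ℝ (fun _ : Fin (n+1) => ℝ)).symm
            (k.insertNth c y)) k = c := by
          show Fin.insertNth (α := fun _ : Fin (n+1) => ℝ) k c y k = c
          exact Fin.insertNth_apply_same (α := fun _ : Fin (n+1) => ℝ) k c y
        rw [hsame]; exact hc
      refine Finset.sum_eq_zero fun i _ => ?_
      rw [hbc i k _ hxQ hxk, zero_mul]
    have hdiv : (∫ y in Set.Icc a b,
        ∑ k, pd k (fun x' => ∑ i, κ x' * pd k (fun z => m z i) x' * m x' i)
          ((PiLp.continuousLinearEquiv 2 ℝ (fun _ : Fin (n+1) => ℝ)).symm y)) = 0 := by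
      have H := integral_divergence_of_hasFDerivAt_off_countable' a b
        (fun k => (hab k).le)
        (fun k y => ∑ i, κ ((PiLp.continuousLinearEquiv 2 ℝ (fun _ : Fin (n+1) => ℝ)).symm y) * pd k (fun z => m z i) ((PiLp.continuousLinearEquiv 2 ℝ (fun _ : Fin (n+1) => ℝ)).symm y) *
            m ((PiLp.continuousLinearEquiv 2 ℝ (fun _ : Fin (n+1) => ℝ)).symm y) i)
        (fun k y =>
          (fderiv ℝ (fun x' => ∑ i, κ x' * pd k (fun z => m z i) x' * m x' i)
            ((PiLp.continuousLinearEquiv 2 ℝ (fun _ : Fin (n+1) => ℝ)).symm y)).comp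
            ((PiLp.continuousLinearEquiv 2 ℝ (fun _ : Fin (n+1) => ℝ)).symm : (Fin (n+1) → ℝ) →L[ℝ] EuclideanSpace ℝ (Fin (n+1))))
        ∅ Set.countable_empty
        (fun k => by
          have h1 : ContinuousOn
              ((fun x => ∑ i, κ x * pd k (fun z => m z i) x * m x i)
                ∘ ⇑(PiLp.continuousLinearEquiv 2 ℝ (fun _ : Fin (n+1) => ℝ)).symm)
              (Set.Icc a b) :=
            ContinuousOn.comp (aux_G_contDiffOn hκ hU hm k).continuousOn
              (PiLp.continuousLinearEquiv 2 ℝ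
                (fun _ : Fin (n+1) => ℝ)).symm.continuous.continuousOn
              (fun y hy => hQU (hQsub y hy))
          exact h1)
        (fun y hy k => by
          have hyI : y ∈ Set.Icc a b := Set.mem_Icc.2
            ⟨fun j => ((hy.1 j (Set.mem_univ j)).1).le, fun j => ((hy.1 j (Set.mem_univ j)).2).le⟩
          have hyU : (PiLp.continuousLinearEquiv 2 ℝ (fun _ : Fin (n+1) => ℝ)).symm y ∈ U := hQU (hQsub y hyI)
          have hg := (((aux_G_contDiffOn hκ hU hm k).contDiffAt
            (hU.mem_nhds hyU)).differentiableAt one_ne_zero).hasFDerivAt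
          exact hg.comp y (PiLp.continuousLinearEquiv 2 ℝ (fun _ : Fin (n+1) => ℝ)).symm.hasFDerivAt)
        (by
          have hcont : ContinuousOn
              (fun x => ∑ k, pd k
                (fun x' => ∑ i, κ x' * pd k (fun z => m z i) x' * m x' i) x) U :=
            continuousOn_finset_sum _ fun k _ =>
              aux_pd_continuousOn hU (aux_G_contDiffOn hκ hU hm k) k
          have h2 : ContinuousOn
              ((fun x => ∑ k, pd k
                (fun x' => ∑ i, κ x' * pd k (fun z => m z i) x' * m x' i) x)
                ∘ ⇑(PiLp.continuousLinearEquiv 2 ℝ (fun _ : Fin (n+1) => ℝ)).symm)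
              (Set.Icc a b) :=
            ContinuousOn.comp hcont
              (PiLp.continuousLinearEquiv 2 ℝ
                (fun _ : Fin (n+1) => ℝ)).symm.continuous.continuousOn
              (fun y hy => hQU (hQsub y hy))
          exact h2.integrableOn_compact isCompact_Icc)
      rw [Finset.sum_eq_zero (fun k _ => by
        rw [hface k (b k) (Or.inr rfl), hface k (a k) (Or.inl rfl), sub_zero])] at H
      exact H
    have key : (∫ x in Q,
        ((∑ i, (∑ k, pd k (fun y => κ y * pd k (fun z => m z i) y) x) * m x i)
          + κ x * ∑ k, ∑ i, (pd k (fun z => m z i) x) ^ 2)) = 0 := by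
      rw [show (∫ x in Q,
          ((∑ i, (∑ k, pd k (fun y => κ y * pd k (fun z => m z i) y) x) * m x i)
            + κ x * ∑ k, ∑ i, (pd k (fun z => m z i) x) ^ 2))
          = ∫ x in Q, ∑ k, pd k
              (fun x' => ∑ i, κ x' * pd k (fun z => m z i) x' * m x' i) x from
        setIntegral_congr_fun hQm fun x hx => by
          simp only [aux_pd_G hκ hU hm (hQU hx)]
          exact (aux_sum_swap _ _ _ _).symm]
      rw [hTrans]
      exact hdiv
    -- continuity facts
    have hsqcont : ContinuousOn
        (fun x => ∑ k, ∑ i, (pd k (fun z => m z i) x) ^ 2) U :=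
      continuousOn_finset_sum _ fun k _ => continuousOn_finset_sum _ fun i _ =>
        (aux_pd_continuousOn hU ((aux_phi hm i).of_le one_le_two) k).pow 2
    have hRAcont : ContinuousOn
        (fun x => κ x * ∑ k, ∑ i, (pd k (fun z => m z i) x) ^ 2
          + ‖m x‖ ^ 2 - ⟪m x, u⟫ ^ 2) U := by
      apply ContinuousOn.sub
      · exact ((hκ.continuous.continuousOn.mul hsqcont).add (hm.continuousOn.norm.pow 2))
      · exact (hm.continuousOn.inner continuousOn_const).pow 2
    have hPRcont : ContinuousOn
        (fun x => (∑ i, (∑ k, pd k (fun y => κ y * pd k (fun z => m z i) y) x) * m x i)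
          + κ x * ∑ k, ∑ i, (pd k (fun z => m z i) x) ^ 2) U := by
      apply ContinuousOn.add
      · exact continuousOn_finset_sum _ fun i _ =>
          (continuousOn_finset_sum _ fun k _ =>
            aux_pd_continuousOn hU (aux_p hκ hU hm i k) k).mul
            ((aux_phi hm i).continuousOn)
      · exact hκ.continuous.continuousOn.mul hsqcont
    have hIntPR : IntegrableOn
        (fun x => (∑ i, (∑ k, pd k (fun y => κ y * pd k (fun z => m z i) y) x) * m x i)
          + κ x * ∑ k, ∑ i, (pd k (fun z => m z i) x) ^ 2) Q :=
      (hPRcont.mono hQU).integrableOn_compact hQcomp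
    have hIntRA : IntegrableOn
        (fun x => κ x * ∑ k, ∑ i, (pd k (fun z => m z i) x) ^ 2
          + ‖m x‖ ^ 2 - ⟪m x, u⟫ ^ 2) Q :=
      (hRAcont.mono hQU).integrableOn_compact hQcomp
    have main : (∫ x in Q,
        ((∑ i, (∑ k, pd k (fun y => κ y * pd k (fun z => m z i) y) x) * m x i)
          - (‖m x‖ ^ 2 - ⟪m x, u⟫ ^ 2)))
        = - ∫ x in Q,
          (κ x * ∑ k, ∑ i, (pd k (fun z => m z i) x) ^ 2
            + ‖m x‖ ^ 2 - ⟪m x, u⟫ ^ 2) := by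
      have step : (∫ x in Q,
          ((∑ i, (∑ k, pd k (fun y => κ y * pd k (fun z => m z i) y) x) * m x i)
            - (‖m x‖ ^ 2 - ⟪m x, u⟫ ^ 2)))
          = (∫ x in Q,
              ((∑ i, (∑ k, pd k (fun y => κ y * pd k (fun z => m z i) y) x) * m x i)
                + κ x * ∑ k, ∑ i, (pd k (fun z => m z i) x) ^ 2))
            - ∫ x in Q,
              (κ x * ∑ k, ∑ i, (pd k (fun z => m z i) x) ^ 2
                + ‖m x‖ ^ 2 - ⟪m x, u⟫ ^ 2) := by
        rw [← integral_sub hIntPR hIntRA]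
        exact setIntegral_congr_fun hQm fun x _ => by ring
      rw [step, key, zero_sub]
    refine ⟨main, ?_⟩
    rw [main, neg_nonpos]
    apply setIntegral_nonneg hQm
    intro x hx
    have h1 : (0:ℝ) ≤ κ x * ∑ k, ∑ i, (pd k (fun z => m z i) x) ^ 2 :=
      mul_nonneg (hκ0 x hx) (Finset.sum_nonneg fun k _ => Finset.sum_nonneg fun i _ => sq_nonneg _)
    have h2 := hA x
    linarith
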